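/- Let P and Q be two disjoint sets of prime numbers. For a set S of primes, let ℤ_S denote the subring of ℚ consisting of rationals whose denominator (in lowest terms) has all prime factors in S. Then for any abelian group G, the group homomorphism β : G → (G ⊗ ℤ_P) × (G ⊗ ℤ_Q) given by β(g) = (g ⊗ 1, g ⊗ 1) is injective. -/

import Mathlib

/-- For a set `S` of primes, the subring of `ℚ` consisting of rationals whose
denominator (in lowest terms) has all prime factors in `S`. -/
def ratDenSubring (S : Set ℕ) : Subring ℚ where
  carrier := {q : ℚ | ∀ p : ℕ, p.Prime → p ∣ q.den → p ∈ S}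
  zero_mem' := by
    intro p hp hdvd
    rw [Rat.den_zero, Nat.dvd_one] at hdvd
    exact absurd hdvd hp.ne_one
  one_mem' := by
    intro p hp hdvd
    rw [Rat.den_one, Nat.dvd_one] at hdvd
    exact absurd hdvd hp.ne_one
  add_mem' := by
    intro a b ha hb p hp hdvd
    rcases hp.dvd_mul.mp (hdvd.trans (Rat.add_den_dvd a b)) with h | h
    · exact ha p hp h
    · exact hb p hp h
  mul_mem' := by
    intro a b ha hb p hp hdvd
    rcases hp.dvd_mul.mp (hdvd.trans (Rat.mul_den_dvd a b)) with h | h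
    · exact ha p hp h
    · exact hb p hp h
  neg_mem' := by
    intro a ha p hp hdvd
    rw [Rat.den_neg_eq_den] at hdvd
    exact ha p hp hdvd


open TensorProduct

/-- The submonoid of `ℤ` generated by the primes in `S`. -/
def primeMonoid (S : Set ℕ) : Submonoid ℤ :=
  Submonoid.closure ((fun p : ℕ => (p : ℤ)) '' S)

lemma primeMonoid_pos (S : Set ℕ) (hS : ∀ p ∈ S, Nat.Prime p) :
    ∀ n ∈ primeMonoid S, 0 < n := by
  intro n hn
  induction hn using Submonoid.closure_induction with
  | mem x hx => obtain ⟨p, hp, rfl⟩ := hx; simpa using (hS p hp).pos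
  | one => norm_num
  | mul a b _ _ ha hb => exact mul_pos ha hb

lemma primeMonoid_prime_dvd (S : Set ℕ) (hS : ∀ p ∈ S, Nat.Prime p)
    {n : ℤ} (hn : n ∈ primeMonoid S) {q : ℕ} (hq : q.Prime) (hdvd : (q : ℤ) ∣ n) :
    q ∈ S := by
  induction hn using Submonoid.closure_induction with
  | mem x hx =>
      obtain ⟨p, hp, rfl⟩ := hx
      have : q ∣ p := Int.natCast_dvd_natCast.mp hdvd
      rwa [(Nat.prime_dvd_prime_iff_eq hq (hS p hp)).mp this]
  | one =>
      have : q ∣ 1 := Int.natCast_dvd_natCast.mp (by exact_mod_cast hdvd)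
      exact absurd (Nat.eq_one_of_dvd_one this) hq.ne_one
  | mul a b _ _ ha hb =>
      rcases (Nat.prime_iff_prime_int.mp hq).dvd_mul.mp hdvd with h | h
      · exact ha h
      · exact hb h

lemma nat_mem_primeMonoid (S : Set ℕ) {n : ℕ} (hn : 0 < n)
    (h : ∀ p : ℕ, p.Prime → p ∣ n → p ∈ S) : (n : ℤ) ∈ primeMonoid S := by
  have hprod : (n.primeFactorsList.map (fun p : ℕ => (p : ℤ))).prod = (n : ℤ) := by
    rw [← Nat.cast_list_prod, Nat.prod_primeFactorsList hn.ne']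
  rw [← hprod]
  refine Submonoid.list_prod_mem _ ?_
  intro x hx
  simp only [List.mem_map] at hx
  obtain ⟨p, hp, rfl⟩ := hx
  exact Submonoid.subset_closure
    ⟨p, h p (Nat.prime_of_mem_primeFactorsList hp) (Nat.dvd_of_mem_primeFactorsList hp), rfl⟩

lemma isLocalization_ratDenSubring (S : Set ℕ) (hS : ∀ p ∈ S, Nat.Prime p) :
    IsLocalization (primeMonoid S) (ratDenSubring S) where
  map_units := by
    rintro ⟨n, hn⟩
    have hpos : 0 < n := primeMonoid_pos S hS n hn
    have hden : (((n : ℚ)⁻¹).den : ℤ) = n := by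
      rw [Rat.inv_intCast_den_of_pos hpos]
    refine IsUnit.of_mul_eq_one ⟨(n : ℚ)⁻¹, ?_⟩ ?_
    · intro p hp hdvd
      refine primeMonoid_prime_dvd S hS hn hp ?_
      rw [← hden]
      exact_mod_cast hdvd
    · ext
      push_cast
      try simp only [Subring.coe_mul]
      have : ((algebraMap ℤ (ratDenSubring S) n : ratDenSubring S) : ℚ) = (n : ℚ) := by
        rw [eq_intCast]; simp
      rw [this]
      exact mul_inv_cancel₀ (by exact_mod_cast hpos.ne')
  surj := by
    intro z
    have hden : ((z : ℚ).den : ℤ) ∈ primeMonoid S :=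
      nat_mem_primeMonoid S (z : ℚ).pos z.2
    refine ⟨((z : ℚ).num, ⟨((z : ℚ).den : ℤ), hden⟩), ?_⟩
    ext
    push_cast
    try simp only [Subring.coe_mul]
    have h1 : ((algebraMap ℤ (ratDenSubring S) ((z : ℚ).den : ℤ) : ratDenSubring S) : ℚ)
        = ((z : ℚ).den : ℚ) := by rw [eq_intCast]; simp
    have h2 : ((algebraMap ℤ (ratDenSubring S) (z : ℚ).num : ratDenSubring S) : ℚ)
        = ((z : ℚ).num : ℚ) := by rw [eq_intCast]; simp
    rw [h2]; exact Rat.mul_den_eq_num _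
  exists_of_eq := by
    intro x y h
    refine ⟨1, ?_⟩
    have : ((x : ℚ)) = (y : ℚ) := by
      have := congrArg (fun t : ratDenSubring S => (t : ℚ)) h
      simpa using this
    simpa using Int.cast_injective this

lemma exists_smul_eq_zero_of_tmul_eq_zero (S : Set ℕ) (hS : ∀ p ∈ S, Nat.Prime p)
    (G : Type*) [AddCommGroup G] (g : G)
    (h : (TensorProduct.tmul ℤ g (1 : ratDenSubring S) :
        TensorProduct ℤ G (ratDenSubring S)) = 0) :
    ∃ n ∈ primeMonoid S, n • g = 0 := by
  haveI : IsLocalization (primeMonoid S) (ratDenSubring S) :=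
    isLocalization_ratDenSubring S hS
  let f : G →ₗ[ℤ] (ratDenSubring S) ⊗[ℤ] G := TensorProduct.mk ℤ (ratDenSubring S) G 1
  haveI : IsLocalizedModule (primeMonoid S) f :=
    (isLocalizedModule_iff_isBaseChange (primeMonoid S) (ratDenSubring S) f).mpr
      (TensorProduct.isBaseChange ℤ G (ratDenSubring S))
  have h0 : f g = 0 := by
    have hfg : f g = (TensorProduct.comm ℤ G (ratDenSubring S))
        (TensorProduct.tmul ℤ g (1 : ratDenSubring S)) := by
      simp [f, TensorProduct.comm_tmul]
      rfl
    rw [hfg, h, LinearEquiv.map_zero]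
  obtain ⟨⟨s, hs⟩, hsg⟩ := (IsLocalizedModule.eq_zero_iff (primeMonoid S) f).mp h0
  exact ⟨s, hs, hsg⟩

/-- If `P` and `Q` are disjoint sets of primes, then for any abelian group `G` the
map `g ↦ (g ⊗ 1, g ⊗ 1)` from `G` to `(G ⊗ ℤ_P) × (G ⊗ ℤ_Q)` is injective. -/
theorem localization_pair_injective (P Q : Set ℕ) (hP : ∀ p ∈ P, Nat.Prime p)
    (hQ : ∀ p ∈ Q, Nat.Prime p) (hPQ : Disjoint P Q)
    (G : Type*) [AddCommGroup G] :
    Function.Injective (fun g : G =>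
      ((TensorProduct.tmul ℤ g (1 : ratDenSubring P) :
          TensorProduct ℤ G (ratDenSubring P)),
       (TensorProduct.tmul ℤ g (1 : ratDenSubring Q) :
          TensorProduct ℤ G (ratDenSubring Q)))) := by
  intro g₁ g₂ h
  have hP' := congrArg Prod.fst h
  have hQ' := congrArg Prod.snd h
  simp only at hP' hQ'
  set g := g₁ - g₂ with hg
  have hPz : (TensorProduct.tmul ℤ g (1 : ratDenSubring P) :
      TensorProduct ℤ G (ratDenSubring P)) = 0 := by
    rw [hg, TensorProduct.sub_tmul, hP', sub_self]
  have hQz : (TensorProduct.tmul ℤ g (1 : ratDenSubring Q) :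
      TensorProduct ℤ G (ratDenSubring Q)) = 0 := by
    rw [hg, TensorProduct.sub_tmul, hQ', sub_self]
  obtain ⟨s, hs, hsg⟩ := exists_smul_eq_zero_of_tmul_eq_zero P hP G g hPz
  obtain ⟨t, ht, htg⟩ := exists_smul_eq_zero_of_tmul_eq_zero Q hQ G g hQz
  have hcop : IsCoprime s t := by
    rw [Int.isCoprime_iff_gcd_eq_one]
    by_contra hne
    have hs0 : s ≠ 0 := (primeMonoid_pos P hP s hs).ne'
    have hgcd0 : Int.gcd s t ≠ 0 := fun h0 => hs0 (Int.gcd_eq_zero_iff.mp h0).1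
    obtain ⟨q, hq, hqd⟩ := Nat.exists_prime_and_dvd hne
    have hqs : (q : ℤ) ∣ s := (Int.natCast_dvd_natCast.mpr hqd).trans (Int.gcd_dvd_left s t)
    have hqt : (q : ℤ) ∣ t := (Int.natCast_dvd_natCast.mpr hqd).trans (Int.gcd_dvd_right s t)
    exact Set.disjoint_left.mp hPQ (primeMonoid_prime_dvd P hP hs hq hqs)
      (primeMonoid_prime_dvd Q hQ ht hq hqt)
  obtain ⟨a, b, hab⟩ := hcop
  have : g = 0 := by
    calc g = (a * s + b * t) • g := by rw [hab, one_smul]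
    _ = a • (s • g) + b • (t • g) := by rw [add_smul, mul_smul, mul_smul]
    _ = 0 := by rw [hsg, htg, smul_zero, smul_zero, add_zero]
  exact sub_eq_zero.mp this
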